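/- Let (X, dist) be a metric space, let z ≥ 1 be an integer, let P be a finite multiset of points of X, let x, x' ∈ X, and let r > 0 and 0 < r' ≤ r/2 with dist(x, x') ≤ r/2. Then ∑_{p∈P, dist(p,x')≤r'} (r' − dist(p, x'))^z ≤ ∑_{p∈P, dist(p,x)≤r} (r − dist(p, x))^z, i.e., val(B(x', r')) ≤ val(B(x, r)). -/
import Mathlib

/-- **Monotonicity of the ball value.** Let `(X, dist)` be a metric space, `z ≥ 1` an
integer, `P` a finite multiset of points of `X`, `x, x' ∈ X`, `r > 0` and
`0 < r' ≤ r/2` with `dist(x, x') ≤ r/2`.  Then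
`∑_{p∈P, dist(p,x')≤r'} (r' − dist(p, x'))^z ≤ ∑_{p∈P, dist(p,x)≤r} (r − dist(p, x))^z`,
i.e. `val(B(x', r')) ≤ val(B(x, r))`. -/
theorem ball_value_mono {X : Type*} [MetricSpace X]
    (z : ℕ) (hz : 1 ≤ z) (P : Multiset X)
    (x x' : X) (r r' : ℝ) (hr : 0 < r) (hr' : 0 < r') (hr'r : r' ≤ r / 2)
    (hxx' : dist x x' ≤ r / 2) :
    ((P.filter (fun p => dist p x' ≤ r')).map (fun p => (r' - dist p x') ^ z)).sum
      ≤ ((P.filter (fun p => dist p x ≤ r)).map (fun p => (r - dist p x) ^ z)).sum := by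
  have himp : ∀ p : X, dist p x' ≤ r' → dist p x ≤ r := by
    intro p hp
    calc dist p x ≤ dist p x' + dist x' x := dist_triangle p x' x
    _ ≤ r' + r / 2 := by rw [dist_comm x' x]; exact add_le_add hp hxx'
    _ ≤ r / 2 + r / 2 := by linarith
    _ = r := by ring
  calc ((P.filter (fun p => dist p x' ≤ r')).map (fun p => (r' - dist p x') ^ z)).sum
      ≤ ((P.filter (fun p => dist p x' ≤ r')).map (fun p => (r - dist p x) ^ z)).sum := by
        apply Multiset.sum_map_le_sum_map
        intro p hp
        have hp' : dist p x' ≤ r' := (Multiset.mem_filter.mp hp).2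
        apply pow_le_pow_left₀ (by linarith)
        have : dist p x ≤ dist p x' + dist x' x := dist_triangle p x' x
        rw [dist_comm x' x] at this
        linarith
    _ ≤ ((P.filter (fun p => dist p x ≤ r)).map (fun p => (r - dist p x) ^ z)).sum := by
        have hle : P.filter (fun p => dist p x' ≤ r') ≤ P.filter (fun p => dist p x ≤ r) :=
          Multiset.monotone_filter_right P himp
        obtain ⟨u, hu⟩ := Multiset.le_iff_exists_add.mp hle
        rw [hu, Multiset.map_add, Multiset.sum_add]
        have : 0 ≤ (u.map (fun p => (r - dist p x) ^ z)).sum := by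
          apply Multiset.sum_nonneg
          intro a ha
          obtain ⟨p, hp, rfl⟩ := Multiset.mem_map.mp ha
          have hpu : p ∈ P.filter (fun p => dist p x ≤ r) :=
            Multiset.mem_of_le (Multiset.le_iff_exists_add.mpr ⟨_, (add_comm _ u ▸ hu)⟩) hp
          have := (Multiset.mem_filter.mp hpu).2
          exact pow_nonneg (by linarith) z
        linarith
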